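/- Let m ≥ 2 be an integer, c ∈ ℝ, α > 0, and let p(n) ∈ [0,1] be a sequence such that p(n) ≥ (1+α)·(log n + c)/n for all sufficiently large n. Then there exists a constant C > 0 such that the probability that B_m(n, p(n)) admits a 2-directing word of length at most C·n·log n tends to 1 as n → ∞. In particular, for any fixed m ≥ 2, a set of m independent uniformly random n×n binary matrices (i.e., p(n) = 1/2 for all n) admits a 2-directing word of length O(n·log n) with probability tending to 1 as n → ∞. -/

import Mathlib

open Matrix Filter

/-- The 0/1 matrix (over `ℕ`) associated to a Boolean matrix of entries. -/
def toMat {n : ℕ} (b : Fin n → Fin n → Bool) : Matrix (Fin n) (Fin n) ℕ :=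
  Matrix.of fun i j => if b i j then 1 else 0

open Classical in
/-- The probability that the random set `B_m(n, p)` of `m` independent random `n × n`
binary matrices, whose `m · n²` entries are i.i.d. Bernoulli(`p`), satisfies `E`. -/
noncomputable def bernoulliProb (n m : ℕ) (p : ℝ)
    (E : (Fin m → Matrix (Fin n) (Fin n) ℕ) → Prop) : ℝ :=
  ∑ b : Fin m → Fin n → Fin n → Bool,
    if E (fun k => toMat (b k)) then
      ∏ k : Fin m, ∏ i : Fin n, ∏ j : Fin n, (if b k i j then p else 1 - p)
    else 0

/-- The set `M` admits a 2-directing word of length at most `L`: there is a nonempty word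
`w` of length at most `L` whose product has every column either entrywise positive or
entrywise zero. -/
def TwoDirWithin {n m : ℕ} (M : Fin m → Matrix (Fin n) (Fin n) ℕ) (L : ℝ) : Prop :=
  ∃ w : List (Fin m), w ≠ [] ∧ (w.length : ℝ) ≤ L ∧
    ∀ j, (∀ i, 0 < (w.map M).prod i j) ∨ (∀ i, (w.map M).prod i j = 0)

open Finset

/-! ### Deterministic part -/

section Det

variable {n : ℕ} (g : Fin n → Fin n → Bool)

lemma pow_apply_mul_le (a b : ℕ) (i x j : Fin n) :
    ((toMat g) ^ a) i x * ((toMat g) ^ b) x j ≤ ((toMat g) ^ (a + b)) i j := by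
  rw [pow_add, Matrix.mul_apply]
  exact Finset.single_le_sum (f := fun y => ((toMat g) ^ a) i y * ((toMat g) ^ b) y j)
    (fun _ _ => Nat.zero_le _) (mem_univ x)

lemma toMat_pos {i j : Fin n} (h : g i j = true) : 0 < toMat g i j := by
  simp [toMat, h]

lemma loop_pow {v : Fin n} (hv : g v v = true) : ∀ t, 0 < ((toMat g) ^ t) v v := by
  intro t
  induction t with
  | zero => simp [Matrix.one_apply_eq]
  | succ t ih =>
    have := pow_apply_mul_le g t 1 v v v
    rw [pow_one] at this
    have hA : 0 < toMat g v v := toMat_pos g hv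
    calc 0 < ((toMat g) ^ t) v v * toMat g v v := Nat.mul_pos ih hA
    _ ≤ _ := this

open Classical in
lemma reach_card (hcut : ∀ S : Finset (Fin n), S.Nonempty → S ≠ univ →
      ∃ i ∈ S, ∃ j, j ∉ S ∧ g i j = true) (i : Fin n) :
    ∀ k, min (k + 1) n ≤ (univ.filter (fun j => ∃ d ≤ k, 0 < ((toMat g) ^ d) i j)).card := by
  have hn : 0 < n := i.pos
  intro k
  induction k with
  | zero =>
    have hi : i ∈ univ.filter (fun j => ∃ d ≤ 0, 0 < ((toMat g) ^ d) i j) := by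
      simp only [mem_filter, mem_univ, true_and]
      exact ⟨0, le_refl 0, by simp [Matrix.one_apply_eq]⟩
    have := Finset.card_pos.mpr ⟨i, hi⟩
    omega
  | succ k ih =>
    set R := univ.filter (fun j => ∃ d ≤ k, 0 < ((toMat g) ^ d) i j) with hR
    set R' := univ.filter (fun j => ∃ d ≤ k + 1, 0 < ((toMat g) ^ d) i j) with hR'
    have hsub : R ⊆ R' := by
      intro j hj
      simp only [hR, hR', mem_filter, mem_univ, true_and] at *
      obtain ⟨d, hd, hpos⟩ := hj
      exact ⟨d, by omega, hpos⟩
    by_cases huniv : R = univ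
    · have : R' = univ := univ_subset_iff.mp (huniv ▸ hsub)
      rw [this, card_univ, Fintype.card_fin]
      omega
    · have hne : R.Nonempty := ⟨i, by
        simp only [hR, mem_filter, mem_univ, true_and]
        exact ⟨0, Nat.zero_le _, by simp [Matrix.one_apply_eq]⟩⟩
      obtain ⟨a, ha, j, hj, hgaj⟩ := hcut R hne huniv
      have hjR' : j ∈ R' := by
        simp only [hR, mem_filter, mem_univ, true_and] at ha
        obtain ⟨d, hd, hpos⟩ := ha
        simp only [hR', mem_filter, mem_univ, true_and]
        refine ⟨d + 1, by omega, ?_⟩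
        calc 0 < ((toMat g) ^ d) i a * toMat g a j :=
              Nat.mul_pos hpos (toMat_pos g hgaj)
        _ ≤ _ := by simpa using pow_apply_mul_le g d 1 i a j
      have hss : R ⊂ R' := ssubset_iff_of_subset hsub |>.mpr ⟨j, hjR', hj⟩
      have h1 : R.card < R'.card := card_lt_card hss
      have h2 : R.card < n := by
        have := card_lt_card (ssubset_univ_iff.mpr huniv)
        simpa [card_univ] using this
      omega

open Classical in
lemma reach_all (hcut : ∀ S : Finset (Fin n), S.Nonempty → S ≠ univ →
      ∃ i ∈ S, ∃ j, j ∉ S ∧ g i j = true) (i j : Fin n) :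
    ∃ d ≤ n - 1, 0 < ((toMat g) ^ d) i j := by
  have hn : 0 < n := i.pos
  have h := reach_card g hcut i (n - 1)
  have hmin : min (n - 1 + 1) n = n := by omega
  rw [hmin] at h
  have : (univ.filter (fun j => ∃ d ≤ n - 1, 0 < ((toMat g) ^ d) i j)) = univ := by
    apply Finset.eq_univ_of_card
    have hle := Finset.card_le_univ (univ.filter (fun j => ∃ d ≤ n - 1, 0 < ((toMat g) ^ d) i j))
    simp only [card_univ, Fintype.card_fin] at hle ⊢
    omega
  have hj : j ∈ univ.filter (fun j => ∃ d ≤ n - 1, 0 < ((toMat g) ^ d) i j) := by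
    rw [this]; exact mem_univ j
  simpa using hj

lemma det_main (hcut : ∀ S : Finset (Fin n), S.Nonempty → S ≠ univ →
      ∃ i ∈ S, ∃ j, j ∉ S ∧ g i j = true) {v : Fin n} (hv : g v v = true) (i j : Fin n) :
    0 < ((toMat g) ^ (2 * n)) i j := by
  obtain ⟨d1, hd1, h1⟩ := reach_all g hcut i v
  obtain ⟨d2, hd2, h2⟩ := reach_all g hcut v j
  have hn : 0 < n := i.pos
  have hsum : d1 + ((2 * n - d1 - d2) + d2) = 2 * n := by omega
  have step1 : 0 < ((toMat g) ^ ((2 * n - d1 - d2) + d2)) v j := by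
    calc 0 < ((toMat g) ^ (2 * n - d1 - d2)) v v * ((toMat g) ^ d2) v j :=
          Nat.mul_pos (loop_pow g hv _) h2
    _ ≤ _ := pow_apply_mul_le g _ _ v v j
  calc 0 < ((toMat g) ^ d1) i v * ((toMat g) ^ ((2 * n - d1 - d2) + d2)) v j :=
        Nat.mul_pos h1 step1
  _ ≤ ((toMat g) ^ (d1 + ((2 * n - d1 - d2) + d2))) i j := pow_apply_mul_le g _ _ i v j
  _ = _ := by rw [hsum]

end Det

lemma two_le_log {n : ℕ} (hn : 8 ≤ n) : (2 : ℝ) ≤ Real.log n := by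
  have hnpos : (0 : ℝ) < n := by positivity
  rw [Real.le_log_iff_exp_le hnpos]
  have h1 : Real.exp 2 = Real.exp 1 * Real.exp 1 := by
    rw [← Real.exp_add]; norm_num
  have h2 : Real.exp 1 < 2.7182818286 := Real.exp_one_lt_d9
  have h3 : Real.exp 2 < 8 := by
    rw [h1]
    nlinarith [Real.exp_pos 1]
  have : (8 : ℝ) ≤ n := by exact_mod_cast hn
  linarith

/-- The good event implies a 2-directing word within length `1 * n * log n`. -/
lemma good_implies_twodir {n m : ℕ} (hm : 2 ≤ m) (hn : 8 ≤ n)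
    (b : Fin m → Fin n → Fin n → Bool)
    (hv : ∃ v, b ⟨0, by omega⟩ v v = true)
    (hcut : ∀ S : Finset (Fin n), S.Nonempty → S ≠ univ →
      ∃ i ∈ S, ∃ j, j ∉ S ∧ b ⟨0, by omega⟩ i j = true) :
    TwoDirWithin (fun k => toMat (b k)) (1 * n * Real.log n) := by
  obtain ⟨v, hv⟩ := hv
  set k0 : Fin m := ⟨0, by omega⟩
  refine ⟨List.replicate (2 * n) k0, ?_, ?_, ?_⟩
  · apply List.ne_nil_of_length_pos; simp; omega
  · rw [List.length_replicate]
    have hlog := two_le_log hn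
    have hnR : (0 : ℝ) ≤ (n : ℝ) := by positivity
    push_cast
    nlinarith
  · intro j
    left
    intro i
    rw [List.map_replicate, List.prod_replicate]
    exact det_main (b k0) hcut hv i j

/-! ### Probability framework -/

noncomputable def wt (q : ℝ) (x : Bool) : ℝ := if x then q else 1 - q

open Classical in
noncomputable def Pr (ι : Type*) [Fintype ι] [DecidableEq ι] (q : ℝ) (E : (ι → Bool) → Prop) : ℝ :=
  ∑ f : ι → Bool, if E f then ∏ i, wt q (f i) else 0

section PrLemmas

variable {ι : Type*} [Fintype ι] [DecidableEq ι] {q : ℝ}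

lemma wt_nonneg (hq0 : 0 ≤ q) (hq1 : q ≤ 1) (x : Bool) : 0 ≤ wt q x := by
  cases x <;> simp [wt] <;> linarith

lemma sum_prod_bool (g : ι → Bool → ℝ) :
    ∑ f : ι → Bool, ∏ i, g i (f i) = ∏ i, (g i true + g i false) := by
  classical
  rw [← Fintype.piFinset_univ, Finset.sum_prod_piFinset]
  congr 1
  ext i
  simp

lemma Pr_congr {E E' : (ι → Bool) → Prop} (h : ∀ f, E f ↔ E' f) :
    Pr ι q E = Pr ι q E' := by
  unfold Pr
  apply Finset.sum_congr rfl
  intro f _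
  by_cases hE : E f
  · rw [if_pos hE, if_pos ((h f).mp hE)]
  · rw [if_neg hE, if_neg (fun h' => hE ((h f).mpr h'))]

lemma Pr_total : Pr ι q (fun _ => True) = 1 := by
  classical
  have h1 : Pr ι q (fun _ => True) = ∑ f : ι → Bool, ∏ i, wt q (f i) :=
    Finset.sum_congr rfl (fun f _ => by simp)
  have h2 := sum_prod_bool (ι := ι) (fun _ x => wt q x)
  rw [h1, h2]
  simp [wt]

lemma summand_nonneg (hq0 : 0 ≤ q) (hq1 : q ≤ 1) (E : (ι → Bool) → Prop) (f : ι → Bool)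
    [Decidable (E f)] :
    0 ≤ if E f then ∏ i, wt q (f i) else 0 := by
  split
  · exact Finset.prod_nonneg fun i _ => wt_nonneg hq0 hq1 _
  · exact le_refl 0

lemma Pr_mono (hq0 : 0 ≤ q) (hq1 : q ≤ 1) {E E' : (ι → Bool) → Prop}
    (h : ∀ f, E f → E' f) : Pr ι q E ≤ Pr ι q E' := by
  classical
  unfold Pr
  apply Finset.sum_le_sum
  intro f _
  by_cases hE : E f
  · rw [if_pos hE, if_pos (h f hE)]
  · rw [if_neg hE]
    exact summand_nonneg hq0 hq1 E' f

lemma Pr_nonneg (hq0 : 0 ≤ q) (hq1 : q ≤ 1) (E : (ι → Bool) → Prop) : 0 ≤ Pr ι q E := by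
  classical
  unfold Pr
  exact Finset.sum_nonneg fun f _ => summand_nonneg hq0 hq1 E f

lemma Pr_le_one (hq0 : 0 ≤ q) (hq1 : q ≤ 1) (E : (ι → Bool) → Prop) : Pr ι q E ≤ 1 := by
  have := Pr_mono (ι := ι) hq0 hq1 (E := E) (E' := fun _ => True) (fun _ _ => trivial)
  rwa [Pr_total] at this

lemma Pr_compl (E : (ι → Bool) → Prop) : Pr ι q E + Pr ι q (fun f => ¬ E f) = 1 := by
  classical
  have htot : Pr ι q (fun _ => True) = 1 := Pr_total
  rw [← htot]
  unfold Pr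
  rw [← Finset.sum_add_distrib]
  apply Finset.sum_congr rfl
  intro f _
  by_cases hE : E f <;> simp [hE]

lemma Pr_biUnion {κ : Type*} (hq0 : 0 ≤ q) (hq1 : q ≤ 1) (A : Finset κ)
    (Es : κ → (ι → Bool) → Prop) {E : (ι → Bool) → Prop}
    (h : ∀ f, E f → ∃ x ∈ A, Es x f) :
    Pr ι q E ≤ ∑ x ∈ A, Pr ι q (Es x) := by
  classical
  unfold Pr
  rw [Finset.sum_comm]
  apply Finset.sum_le_sum
  intro f _
  by_cases hE : E f
  · obtain ⟨x, hx, hEx⟩ := h f hE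
    rw [if_pos hE]
    calc (∏ i, wt q (f i)) = if Es x f then ∏ i, wt q (f i) else 0 := by rw [if_pos hEx]
    _ ≤ ∑ y ∈ A, if Es y f then ∏ i, wt q (f i) else 0 :=
        Finset.single_le_sum (fun y _ => summand_nonneg hq0 hq1 (Es y) f) hx
  · rw [if_neg hE]
    exact Finset.sum_nonneg fun y _ => summand_nonneg hq0 hq1 (Es y) f

lemma Pr_allFalse (T : Finset ι) :
    Pr ι q (fun f => ∀ i ∈ T, f i = false) = (1 - q) ^ T.card := by
  classical
  have h1 : Pr ι q (fun f => ∀ i ∈ T, f i = false)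
      = ∑ f : ι → Bool, ∏ i, (fun i x => if i ∈ T then (if x then 0 else 1 - q) else wt q x) i (f i) := by
    apply Finset.sum_congr rfl
    intro f _
    by_cases hf : ∀ i ∈ T, f i = false
    · rw [if_pos hf]
      apply Finset.prod_congr rfl
      intro i _
      by_cases hi : i ∈ T
      · rw [hf i hi]; simp [hi, wt]
      · simp [hi]
    · rw [if_neg hf]
      push_neg at hf
      obtain ⟨i0, hi0, hfi0⟩ := hf
      have : f i0 = true := by simpa using hfi0
      symm
      apply Finset.prod_eq_zero (mem_univ i0)
      simp [hi0, this]
  have h2 := sum_prod_bool (ι := ι) (fun i x => if i ∈ T then (if x then 0 else 1 - q) else wt q x)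
  rw [h1, h2]
  have h3 : ∀ i : ι,
      ((if i ∈ T then (if true then (0:ℝ) else 1 - q) else wt q true)
        + (if i ∈ T then (if false then (0:ℝ) else 1 - q) else wt q false))
      = if i ∈ T then 1 - q else 1 := by
    intro i
    by_cases hi : i ∈ T <;> simp [hi, wt]
  rw [Finset.prod_congr rfl (fun i _ => h3 i), Finset.prod_ite_mem, Finset.univ_inter,
    Finset.prod_const]

end PrLemmas

/-! ### Bridging -/

set_option maxHeartbeats 1000000 in
lemma bernoulliProb_eq_Pr (n m : ℕ) (q : ℝ) (E : (Fin m → Matrix (Fin n) (Fin n) ℕ) → Prop) :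
    bernoulliProb n m q E = Pr (Fin m × Fin n × Fin n) q
      (fun f => E (fun k => toMat (fun i j => f (k, i, j)))) := by
  classical
  unfold bernoulliProb Pr
  apply Fintype.sum_bijective
    (fun (b : Fin m → Fin n → Fin n → Bool) (z : Fin m × Fin n × Fin n) => b z.1 z.2.1 z.2.2)
  · constructor
    · intro b b' hbb
      funext k i j
      exact congrFun hbb (k, i, j)
    · intro f
      exact ⟨fun k i j => f (k, i, j), rfl⟩
  · intro b
    have hw : (∏ k : Fin m, ∏ i : Fin n, ∏ j : Fin n, (if b k i j then q else 1 - q))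
        = ∏ z : Fin m × Fin n × Fin n, wt q (b z.1 z.2.1 z.2.2) := by
      rw [Fintype.prod_prod_type (f := fun z : Fin m × Fin n × Fin n => wt q (b z.1 z.2.1 z.2.2))]
      apply Finset.prod_congr rfl
      intro k _
      rw [Fintype.prod_prod_type (f := fun y : Fin n × Fin n => wt q (b k y.1 y.2))]
      rfl
    by_cases hE : E (fun k => toMat (b k))
    · rw [if_pos hE, if_pos hE, hw]
    · rw [if_neg hE, if_neg hE]
/-! ### The good event and its probability -/

/-- The good event on the first matrix: it has a loop and its digraph has no empty cut. -/
def GoodF {n m : ℕ} (k0 : Fin m) (f : Fin m × Fin n × Fin n → Bool) : Prop :=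
  (∃ v, f (k0, v, v) = true) ∧
    ∀ S : Finset (Fin n), S.Nonempty → S ≠ univ → ∃ i ∈ S, ∃ j, j ∉ S ∧ f (k0, i, j) = true

lemma Pr_loopBad {n m : ℕ} (k0 : Fin m) (q : ℝ) :
    Pr (Fin m × Fin n × Fin n) q (fun f => ∀ v : Fin n, f (k0, v, v) = false) = (1 - q) ^ n := by
  have hinj : Function.Injective (fun v : Fin n => (k0, v, v)) := by
    intro a b hab
    simpa using congrArg (fun z : Fin m × Fin n × Fin n => z.2.1) hab
  have hcard : (univ.image (fun v : Fin n => (k0, v, v))).card = n := by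
    rw [Finset.card_image_of_injective _ hinj, card_univ, Fintype.card_fin]
  rw [Pr_congr (E' := fun f => ∀ z ∈ univ.image (fun v : Fin n => (k0, v, v)), f z = false)
    (fun f => by
      constructor
      · intro h z hz
        obtain ⟨v, _, rfl⟩ := Finset.mem_image.mp hz
        exact h v
      · intro h v
        exact h _ (Finset.mem_image_of_mem _ (mem_univ v))),
    Pr_allFalse, hcard]

lemma Pr_cutBad {n m : ℕ} (k0 : Fin m) (q : ℝ) (S : Finset (Fin n)) :
    Pr (Fin m × Fin n × Fin n) q
      (fun f => ∀ i ∈ S, ∀ j, j ∉ S → f (k0, i, j) = false)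
      = (1 - q) ^ (S.card * (n - S.card)) := by
  have hinj : Function.Injective (fun y : Fin n × Fin n => (k0, y.1, y.2)) := by
    intro a b hab
    have h1 := congrArg (fun z : Fin m × Fin n × Fin n => z.2.1) hab
    have h2 := congrArg (fun z : Fin m × Fin n × Fin n => z.2.2) hab
    simp only at h1 h2
    exact Prod.ext h1 h2
  have hcard : ((S ×ˢ Sᶜ).image (fun y : Fin n × Fin n => (k0, y.1, y.2))).card
      = S.card * (n - S.card) := by
    rw [Finset.card_image_of_injective _ hinj, Finset.card_product, Finset.card_compl,
      Fintype.card_fin]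
  rw [Pr_congr (E' := fun f => ∀ z ∈ (S ×ˢ Sᶜ).image (fun y : Fin n × Fin n => (k0, y.1, y.2)),
      f z = false)
    (fun f => by
      constructor
      · intro h z hz
        obtain ⟨y, hy, rfl⟩ := Finset.mem_image.mp hz
        obtain ⟨hy1, hy2⟩ := Finset.mem_product.mp hy
        exact h y.1 hy1 y.2 (Finset.mem_compl.mp hy2)
      · intro h i hi j hj
        exact h _ (Finset.mem_image_of_mem _
          (Finset.mem_product.mpr ⟨hi, Finset.mem_compl.mpr hj⟩))),
    Pr_allFalse, hcard]

lemma Pr_badEvent {n m : ℕ} (k0 : Fin m) (q : ℝ) (hq0 : 0 ≤ q) (hq1 : q ≤ 1) :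
    Pr (Fin m × Fin n × Fin n) q (fun f => ¬ GoodF k0 f)
      ≤ (1 - q) ^ n + ∑ S ∈ univ.filter (fun S : Finset (Fin n) => S.Nonempty ∧ S ≠ univ),
          (1 - q) ^ (S.card * (n - S.card)) := by
  classical
  set 𝒮 : Finset (Finset (Fin n)) := univ.filter (fun S => S.Nonempty ∧ S ≠ univ) with h𝒮
  set A : Finset (Option (Finset (Fin n))) := insert none (𝒮.image some) with hA
  set Es : Option (Finset (Fin n)) → (Fin m × Fin n × Fin n → Bool) → Prop :=
    fun o f => match o with
    | none => ∀ v : Fin n, f (k0, v, v) = false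
    | some S => ∀ i ∈ S, ∀ j, j ∉ S → f (k0, i, j) = false
    with hEs
  have hcover : ∀ f, ¬ GoodF k0 f → ∃ x ∈ A, Es x f := by
    intro f hf
    unfold GoodF at hf
    push_neg at hf
    by_cases h1 : ∃ v, f (k0, v, v) = true
    · obtain ⟨S, hS1, hS2, hS3⟩ := hf h1
      refine ⟨some S, ?_, ?_⟩
      · exact Finset.mem_insert_of_mem (Finset.mem_image_of_mem _
          (Finset.mem_filter.mpr ⟨mem_univ _, hS1, hS2⟩))
      · intro i hi j hj
        have := hS3 i hi j hj
        simpa using this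
    · refine ⟨none, Finset.mem_insert_self _ _, ?_⟩
      intro v
      push_neg at h1
      simpa using h1 v
  have hub := Pr_biUnion hq0 hq1 A Es hcover
  have hsum : ∑ x ∈ A, Pr (Fin m × Fin n × Fin n) q (Es x)
      = (1 - q) ^ n + ∑ S ∈ 𝒮, (1 - q) ^ (S.card * (n - S.card)) := by
    rw [hA, Finset.sum_insert (by simp)]
    congr 1
    · exact Pr_loopBad k0 q
    · rw [Finset.sum_image (fun a _ b _ h => Option.some_injective _ h)]
      exact Finset.sum_congr rfl (fun S _ => Pr_cutBad k0 q S)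
  calc Pr (Fin m × Fin n × Fin n) q (fun f => ¬ GoodF k0 f)
      ≤ ∑ x ∈ A, Pr (Fin m × Fin n × Fin n) q (Es x) := hub
    _ = _ := hsum
/-! ### Analytic estimates -/

lemma one_sub_pow_le_exp {q : ℝ} (hq1 : q ≤ 1) (N : ℕ) :
    (1 - q) ^ N ≤ Real.exp (-q) ^ N := by
  apply pow_le_pow_left₀ (by linarith)
  linarith [Real.add_one_le_exp (-q)]

set_option maxHeartbeats 1600000 in
lemma key_per_s (β : ℝ) (hβ : 0 < β) (n s : ℕ) (hs1 : 1 ≤ s) (hs2 : s + 1 ≤ n)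
    (hL : 4 * (1 + β) * Real.log 2 ≤ β * Real.log n)
    (q : ℝ) (hq1 : q ≤ 1) (hqlb : (1 + β) * Real.log n / n ≤ q) :
    (n.choose s : ℝ) * (1 - q) ^ (s * (n - s))
      ≤ Real.exp (-(β / 2) * Real.log n) ^ (min s (n - s)) := by
  have hn1 : 1 ≤ n := by omega
  set t := min s (n - s) with ht
  have ht1 : 1 ≤ t := by omega
  have h2t : 2 * t ≤ n := by omega
  have htn : t ≤ n := by omega
  have hprod : s * (n - s) = t * (n - t) := by
    rcases le_total s (n - s) with h | h
    · rw [ht, min_eq_left h]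
    · rw [ht, min_eq_right h]
      have h3 : n - (n - s) = s := by omega
      rw [h3, Nat.mul_comm]
  have hch : n.choose s = n.choose t := by
    rcases le_total s (n - s) with h | h
    · rw [ht, min_eq_left h]
    · rw [ht, min_eq_right h, Nat.choose_symm (by omega)]
  -- real abbreviations
  set L := Real.log n with hLdef
  set N := (n : ℝ) with hN
  set T := (t : ℝ) with hT
  have hNpos : (0 : ℝ) < N := by rw [hN]; exact_mod_cast Nat.lt_of_lt_of_le Nat.zero_lt_one hn1
  have hL0 : 0 ≤ L := Real.log_nonneg (by rw [hN] at hNpos; exact_mod_cast hn1)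
  have hT1 : (1 : ℝ) ≤ T := by rw [hT]; exact_mod_cast ht1
  have h2T : 2 * T ≤ N := by rw [hT, hN]; exact_mod_cast h2t
  have hexpL : Real.exp L = N := Real.exp_log hNpos
  have hq' : (1 + β) * L ≤ q * N := by
    rw [div_le_iff₀ hNpos] at hqlb
    exact hqlb
  have hq0 : 0 ≤ q := by
    have : 0 ≤ (1 + β) * L / N := by positivity
    linarith
  have hTN : 0 ≤ T * (N - T) := by nlinarith
  -- bound the power term
  have hcast : ((t * (n - t) : ℕ) : ℝ) = T * (N - T) := by
    push_cast [Nat.cast_sub htn]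
    ring
  have hpow : (1 - q) ^ (s * (n - s)) ≤ Real.exp (-(q * (T * (N - T)))) := by
    rw [hprod]
    calc (1 - q) ^ (t * (n - t)) ≤ Real.exp (-q) ^ (t * (n - t)) := one_sub_pow_le_exp hq1 _
    _ = Real.exp (((t * (n - t) : ℕ) : ℝ) * (-q)) := (Real.exp_nat_mul _ _).symm
    _ = Real.exp (-(q * (T * (N - T)))) := by rw [hcast]; ring_nf
  have hrhs : Real.exp (-(β / 2) * L) ^ t = Real.exp (T * (-(β / 2) * L)) := by
    rw [Real.exp_nat_mul]
  have hch0 : (0 : ℝ) ≤ (n.choose t : ℝ) := by positivity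
  rw [hch, hrhs]
  rcases le_or_gt ((1 + β) * T) (β / 2 * N) with hcase | hcase
  · -- small t: use choose ≤ n ^ t
    have hchoose : (n.choose t : ℝ) ≤ N ^ t := by
      rw [hN]; exact_mod_cast Nat.choose_le_pow n t
    have hNt : Real.exp (T * L) = N ^ t := by
      rw [hT, Real.exp_nat_mul, hexpL]
    calc (n.choose t : ℝ) * (1 - q) ^ (s * (n - s))
        ≤ Real.exp (T * L) * Real.exp (-(q * (T * (N - T)))) := by
          apply mul_le_mul (by rw [hNt]; exact hchoose) hpow
            (pow_nonneg (by linarith) _) (by positivity)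
    _ = Real.exp (T * L + -(q * (T * (N - T)))) := (Real.exp_add _ _).symm
    _ ≤ Real.exp (T * (-(β / 2) * L)) := by
        apply Real.exp_le_exp.mpr
        rw [← mul_le_mul_iff_of_pos_right hNpos]
        have hA : 0 ≤ (q * N - (1 + β) * L) * (T * (N - T)) :=
          mul_nonneg (by linarith) hTN
        have hB : 0 ≤ (L * T) * (β / 2 * N - (1 + β) * T) :=
          mul_nonneg (by positivity) (by linarith)
        nlinarith [hA, hB]
  · -- big t: use choose ≤ 2 ^ n
    have hchoose : (n.choose t : ℝ) ≤ (2 : ℝ) ^ n := by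
      have h1 : n.choose t ≤ 2 ^ n := by
        calc n.choose t ≤ ∑ i ∈ Finset.range (n + 1), n.choose i :=
              Finset.single_le_sum (fun i _ => Nat.zero_le _)
                (Finset.mem_range.mpr (by omega))
        _ = 2 ^ n := Nat.sum_range_choose n
      exact_mod_cast h1
    have h2n : Real.exp (N * Real.log 2) = (2 : ℝ) ^ n := by
      rw [hN, Real.exp_nat_mul, Real.exp_log (by norm_num : (0:ℝ) < 2)]
    have hlog2 : (0 : ℝ) < Real.log 2 := Real.log_pos (by norm_num)
    calc (n.choose t : ℝ) * (1 - q) ^ (s * (n - s))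
        ≤ Real.exp (N * Real.log 2) * Real.exp (-(q * (T * (N - T)))) := by
          apply mul_le_mul (by rw [h2n]; exact hchoose) hpow
            (pow_nonneg (by linarith) _) (by positivity)
    _ = Real.exp (N * Real.log 2 + -(q * (T * (N - T)))) := (Real.exp_add _ _).symm
    _ ≤ Real.exp (T * (-(β / 2) * L)) := by
        apply Real.exp_le_exp.mpr
        -- key auxiliary: L * T ≥ 2 * N * log 2
        have h1β : (0:ℝ) < 1 + β := by linarith
        have f1 : β * L * N ≤ 2 * (1 + β) * (L * T) := by
          nlinarith [mul_nonneg hL0 (show (0:ℝ) ≤ 2 * (1 + β) * T - β * N by nlinarith)]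
        have f2 : 4 * (1 + β) * Real.log 2 * N ≤ β * L * N :=
          mul_le_mul_of_nonneg_right hL (le_of_lt hNpos)
        have f4 : (1 + β) * (4 * (Real.log 2 * N)) ≤ (1 + β) * (2 * (L * T)) := by
          nlinarith [f1, f2]
        have f5 := (mul_le_mul_iff_of_pos_left h1β).mp f4
        have hLT : 2 * Real.log 2 * N ≤ L * T := by linarith
        rw [← mul_le_mul_iff_of_pos_right hNpos]
        have hA : 0 ≤ (q * N - (1 + β) * L) * (T * (N - T)) :=
          mul_nonneg (by linarith) hTN
        have hC : 0 ≤ ((1 + β) * L * T) * ((N - T) - N / 2) := by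
          apply mul_nonneg
          · positivity
          · linarith
        have f6 := mul_le_mul_of_nonneg_right hLT (le_of_lt hNpos)
        nlinarith [hA, hC, f6]

lemma geom_tail (r : ℝ) (hr0 : 0 ≤ r) (hr : r ≤ 1/2) (n : ℕ) :
    ∑ s ∈ Finset.Ico 1 n, r ^ s ≤ 2 * r := by
  have h1 : ∑ s ∈ Finset.Ico 1 n, r ^ s = ∑ i ∈ Finset.range (n - 1), r ^ (1 + i) := by
    rw [Finset.sum_Ico_eq_sum_range]
  have h2 : ∑ i ∈ Finset.range (n - 1), r ^ (1 + i)
      = r * ∑ i ∈ Finset.range (n - 1), r ^ i := by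
    rw [Finset.mul_sum]
    exact Finset.sum_congr rfl (fun i _ => by rw [pow_add, pow_one])
  have hG0 : 0 ≤ ∑ i ∈ Finset.range (n - 1), r ^ i :=
    Finset.sum_nonneg (fun i _ => pow_nonneg hr0 i)
  have hG : (∑ i ∈ Finset.range (n - 1), r ^ i) ≤ 2 := by
    have hgm := geom_sum_mul r (n - 1)
    have hrn : 0 ≤ r ^ (n - 1) := pow_nonneg hr0 _
    nlinarith [hG0]
  rw [h1, h2]
  nlinarith [hG0]

lemma reflect_sum (r : ℝ) (hr0 : 0 ≤ r) (n : ℕ) :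
    ∑ s ∈ Finset.Ico 1 n, r ^ (min s (n - s)) ≤ 2 * ∑ s ∈ Finset.Ico 1 n, r ^ s := by
  have h1 : ∀ s ∈ Finset.Ico 1 n, r ^ (min s (n - s)) ≤ r ^ s + r ^ (n - s) := by
    intro s hs
    rcases le_total s (n - s) with h | h
    · rw [min_eq_left h]
      nlinarith [pow_nonneg hr0 (n - s)]
    · rw [min_eq_right h]
      nlinarith [pow_nonneg hr0 s]
  calc ∑ s ∈ Finset.Ico 1 n, r ^ (min s (n - s))
      ≤ ∑ s ∈ Finset.Ico 1 n, (r ^ s + r ^ (n - s)) := Finset.sum_le_sum h1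
  _ = ∑ s ∈ Finset.Ico 1 n, r ^ s + ∑ s ∈ Finset.Ico 1 n, r ^ (n - s) :=
      Finset.sum_add_distrib
  _ = ∑ s ∈ Finset.Ico 1 n, r ^ s + ∑ s ∈ Finset.Ico 1 n, r ^ s := by
      congr 1
      refine Finset.sum_nbij' (fun s => n - s) (fun s => n - s) ?_ ?_ ?_ ?_ ?_
      · intro a ha
        simp only [Finset.mem_Ico] at ha ⊢
        omega
      · intro a ha
        simp only [Finset.mem_Ico] at ha ⊢
        omega
      · intro a ha
        simp only [Finset.mem_Ico] at ha
        show n - (n - a) = a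
        omega
      · intro a ha
        simp only [Finset.mem_Ico] at ha
        show n - (n - a) = a
        omega
      · intro a _
        rfl
  _ = 2 * ∑ s ∈ Finset.Ico 1 n, r ^ s := by ring

lemma sum_cut_group (n : ℕ) (q : ℝ) (h1q : 0 ≤ 1 - q) :
    ∑ S ∈ univ.filter (fun S : Finset (Fin n) => S.Nonempty ∧ S ≠ univ),
        (1 - q) ^ (S.card * (n - S.card))
      ≤ ∑ s ∈ Finset.Ico 1 n, (n.choose s : ℝ) * (1 - q) ^ (s * (n - s)) := by
  classical
  set 𝒮 : Finset (Finset (Fin n)) := univ.filter (fun S => S.Nonempty ∧ S ≠ univ) with h𝒮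
  have hmaps : ∀ S ∈ 𝒮, S.card ∈ Finset.Ico 1 n := by
    intro S hS
    rw [h𝒮, Finset.mem_filter] at hS
    obtain ⟨-, hne, hnu⟩ := hS
    rw [Finset.mem_Ico]
    constructor
    · exact hne.card_pos
    · have := Finset.card_lt_card (Finset.ssubset_univ_iff.mpr hnu)
      simpa [card_univ] using this
  rw [← Finset.sum_fiberwise_of_maps_to hmaps]
  apply Finset.sum_le_sum
  intro s _
  have hconst : ∀ S ∈ 𝒮.filter (fun S => S.card = s),
      (1 - q) ^ (S.card * (n - S.card)) = (1 - q) ^ (s * (n - s)) := by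
    intro S hS
    rw [(Finset.mem_filter.mp hS).2]
  rw [Finset.sum_congr rfl hconst, Finset.sum_const, nsmul_eq_mul]
  apply mul_le_mul_of_nonneg_right _ (pow_nonneg h1q _)
  have hsubset : 𝒮.filter (fun S => S.card = s) ⊆ Finset.powersetCard s univ := by
    intro S hS
    rw [Finset.mem_powersetCard]
    exact ⟨Finset.subset_univ S, (Finset.mem_filter.mp hS).2⟩
  have := Finset.card_le_card hsubset
  rw [Finset.card_powersetCard, card_univ, Fintype.card_fin] at this
  exact_mod_cast this

lemma estimate (β : ℝ) (hβ : 0 < β) :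
    ∀ᶠ n : ℕ in atTop, ∀ q : ℝ, q ≤ 1 → (1 + β) * Real.log n / n ≤ q →
      (1 - q) ^ n + ∑ S ∈ univ.filter (fun S : Finset (Fin n) => S.Nonempty ∧ S ≠ univ),
          (1 - q) ^ (S.card * (n - S.card))
        ≤ 1 / n + 4 * Real.exp (-(β / 2) * Real.log n) := by
  have hlogtend : Tendsto (fun n : ℕ => Real.log n) atTop atTop :=
    Real.tendsto_log_atTop.comp tendsto_natCast_atTop_atTop
  filter_upwards [eventually_ge_atTop 1,
    hlogtend.eventually_ge_atTop (4 * (1 + β) * Real.log 2 / β)] with n hn1 hlogn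
  intro q hq1 hqlb
  have hNpos : (0 : ℝ) < n := by exact_mod_cast hn1
  have hL0 : 0 ≤ Real.log n := Real.log_nonneg (by exact_mod_cast hn1)
  have hq0 : 0 ≤ q := le_trans (by positivity) hqlb
  have hL : 4 * (1 + β) * Real.log 2 ≤ β * Real.log n := by
    rw [div_le_iff₀ hβ] at hlogn
    linarith
  have hq' : (1 + β) * Real.log n ≤ q * n := by
    rw [div_le_iff₀ hNpos] at hqlb
    exact hqlb
  set r := Real.exp (-(β / 2) * Real.log n) with hr
  have hr0 : 0 ≤ r := le_of_lt (Real.exp_pos _)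
  have hrhalf : r ≤ 1 / 2 := by
    have hlog2 : (0 : ℝ) < Real.log 2 := Real.log_pos (by norm_num)
    have h1 : Real.log 2 ≤ β / 2 * Real.log n := by nlinarith
    have h2 : -(β / 2) * Real.log n ≤ -Real.log 2 := by linarith
    calc r ≤ Real.exp (-Real.log 2) := Real.exp_le_exp.mpr h2
    _ = 1 / 2 := by
        rw [Real.exp_neg, Real.exp_log (by norm_num : (0:ℝ) < 2)]
        norm_num
  -- first term
  have hterm1 : (1 - q) ^ n ≤ 1 / n := by
    calc (1 - q) ^ n ≤ Real.exp (-q) ^ n := one_sub_pow_le_exp hq1 n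
    _ = Real.exp ((n : ℝ) * (-q)) := (Real.exp_nat_mul _ _).symm
    _ ≤ Real.exp (-Real.log n) := by
        apply Real.exp_le_exp.mpr
        nlinarith
    _ = 1 / n := by
        rw [Real.exp_neg, Real.exp_log hNpos]
        norm_num
  -- second term
  have hterm2 : ∑ S ∈ univ.filter (fun S : Finset (Fin n) => S.Nonempty ∧ S ≠ univ),
      (1 - q) ^ (S.card * (n - S.card)) ≤ 4 * r := by
    calc ∑ S ∈ univ.filter (fun S : Finset (Fin n) => S.Nonempty ∧ S ≠ univ),
        (1 - q) ^ (S.card * (n - S.card))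
        ≤ ∑ s ∈ Finset.Ico 1 n, (n.choose s : ℝ) * (1 - q) ^ (s * (n - s)) :=
          sum_cut_group n q (by linarith)
    _ ≤ ∑ s ∈ Finset.Ico 1 n, r ^ (min s (n - s)) := by
        apply Finset.sum_le_sum
        intro s hs
        rw [Finset.mem_Ico] at hs
        exact key_per_s β hβ n s hs.1 hs.2 hL q hq1 hqlb
    _ ≤ 2 * ∑ s ∈ Finset.Ico 1 n, r ^ s := reflect_sum r hr0 n
    _ ≤ 2 * (2 * r) := by
        have := geom_tail r hr0 hrhalf n
        linarith
    _ = 4 * r := by ring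
  linarith

/-! ### Main convergence lemma -/

lemma main_tendsto (m : ℕ) (hm : 2 ≤ m) (β : ℝ) (hβ : 0 < β) (p : ℕ → ℝ)
    (hp : ∀ n, p n ∈ Set.Icc (0 : ℝ) 1)
    (hlb : ∀ᶠ n : ℕ in atTop, (1 + β) * Real.log n / n ≤ p n) :
    Tendsto (fun n : ℕ => bernoulliProb n m (p n)
        (fun M => TwoDirWithin M (1 * n * Real.log n))) atTop (nhds 1) := by
  have hk0 : 0 < m := by omega
  have hlower : ∀ᶠ n : ℕ in atTop,
      1 - (1 / n + 4 * Real.exp (-(β / 2) * Real.log n))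
        ≤ bernoulliProb n m (p n) (fun M => TwoDirWithin M (1 * n * Real.log n)) := by
    filter_upwards [eventually_ge_atTop 8, hlb, estimate β hβ] with n hn8 hlbn hest
    set q := p n with hq
    have hq0 : 0 ≤ q := (hp n).1
    have hq1 : q ≤ 1 := (hp n).2
    set k0 : Fin m := ⟨0, hk0⟩ with hk0def
    rw [bernoulliProb_eq_Pr]
    have hmono : Pr (Fin m × Fin n × Fin n) q (fun f => GoodF k0 f)
        ≤ Pr (Fin m × Fin n × Fin n) q
          (fun f => TwoDirWithin (fun k => toMat (fun i j => f (k, i, j)))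
            (1 * n * Real.log n)) := by
      apply Pr_mono hq0 hq1
      intro f hf
      exact good_implies_twodir hm hn8 (fun k i j => f (k, i, j)) hf.1 hf.2
    have hcompl := Pr_compl (ι := Fin m × Fin n × Fin n) (q := q) (fun f => GoodF k0 f)
    have hbad := Pr_badEvent (n := n) k0 q hq0 hq1
    have hest' := hest q hq1 hlbn
    linarith
  have hupper : ∀ᶠ n : ℕ in atTop,
      bernoulliProb n m (p n) (fun M => TwoDirWithin M (1 * n * Real.log n)) ≤ 1 := by
    filter_upwards with n
    rw [bernoulliProb_eq_Pr]
    exact Pr_le_one (hp n).1 (hp n).2 _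
  have hlogtend : Tendsto (fun n : ℕ => Real.log n) atTop atTop :=
    Real.tendsto_log_atTop.comp tendsto_natCast_atTop_atTop
  have hmul : Tendsto (fun n : ℕ => β / 2 * Real.log n) atTop atTop :=
    hlogtend.const_mul_atTop (by positivity)
  have hexp : Tendsto (fun n : ℕ => Real.exp (-(β / 2) * Real.log n)) atTop (nhds 0) := by
    have h := Real.tendsto_exp_atBot.comp (tendsto_neg_atTop_atBot.comp hmul)
    apply h.congr
    intro n
    simp only [Function.comp_apply]
    rw [neg_mul]
  have h1n : Tendsto (fun n : ℕ => (1 : ℝ) / n) atTop (nhds 0) :=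
    tendsto_one_div_atTop_nhds_zero_nat
  have hlow_tends : Tendsto (fun n : ℕ => 1 - (1 / n + 4 * Real.exp (-(β / 2) * Real.log n)))
      atTop (nhds 1) := by
    have := (tendsto_const_nhds (x := (1 : ℝ)) (f := atTop)).sub
      (h1n.add (hexp.const_mul 4))
    simpa using this
  exact tendsto_of_tendsto_of_tendsto_of_le_of_le' hlow_tends tendsto_const_nhds hlower hupper

/-- Let `m ≥ 2`, `c ∈ ℝ`, `α > 0`, and `p n ∈ [0,1]` with `p n ≥ (1+α)·(log n + c)/n`
for all large `n`.  Then for some `C > 0` the probability that `B_m(n, p n)` admits a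
2-directing word of length at most `C·n·log n` tends to `1`.  In particular the same holds
for `m` uniformly sampled binary matrices (`p n = 1/2`). -/
theorem stmt8 (m : ℕ) (hm : 2 ≤ m) (c α : ℝ) (hα : 0 < α)
    (p : ℕ → ℝ) (hp : ∀ n, p n ∈ Set.Icc (0 : ℝ) 1)
    (hlarge : ∀ᶠ n : ℕ in atTop, (1 + α) * (Real.log n + c) / n ≤ p n) :
    (∃ C : ℝ, 0 < C ∧
      Tendsto (fun n : ℕ => bernoulliProb n m (p n)
          (fun M => TwoDirWithin M (C * n * Real.log n))) atTop (nhds 1)) ∧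
    (∃ C : ℝ, 0 < C ∧
      Tendsto (fun n : ℕ => bernoulliProb n m (1 / 2)
          (fun M => TwoDirWithin M (C * n * Real.log n))) atTop (nhds 1)) := by
  have hβ : 0 < α / 2 := by linarith
  have hlogtend : Tendsto (fun n : ℕ => Real.log n) atTop atTop :=
    Real.tendsto_log_atTop.comp tendsto_natCast_atTop_atTop
  constructor
  · refine ⟨1, one_pos, ?_⟩
    apply main_tendsto m hm (α / 2) hβ p hp
    filter_upwards [hlarge, hlogtend.eventually_ge_atTop (2 * (1 + α) * |c| / α),
      eventually_ge_atTop 1] with n h1 h2 h3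
    have hNpos : (0 : ℝ) < n := by exact_mod_cast h3
    refine le_trans ?_ h1
    have h2' : 2 * (1 + α) * |c| ≤ Real.log n * α := (div_le_iff₀ hα).mp h2
    have habs : -|c| ≤ c := neg_abs_le c
    have hx : (1 + α / 2) * Real.log n ≤ (1 + α) * (Real.log n + c) := by
      nlinarith [abs_nonneg c]
    exact div_le_div_of_nonneg_right hx (le_of_lt hNpos)
  · refine ⟨1, one_pos, ?_⟩
    apply main_tendsto m hm (α / 2) hβ (fun _ => 1 / 2)
      (fun n => by norm_num)
    have hlit := Real.isLittleO_log_id_atTop.comp_tendsto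
      (tendsto_natCast_atTop_atTop (R := ℝ))
    have hc0 : (0 : ℝ) < 1 / (2 * (1 + α / 2)) := by positivity
    filter_upwards [hlit.def hc0, eventually_ge_atTop 1] with n hbound h3
    have hNpos : (0 : ℝ) < n := by exact_mod_cast h3
    simp only [Function.comp_apply, id_eq, Real.norm_eq_abs] at hbound
    have hlogle : Real.log n ≤ 1 / (2 * (1 + α / 2)) * n := by
      calc Real.log n ≤ |Real.log n| := le_abs_self _
      _ ≤ 1 / (2 * (1 + α / 2)) * |(n : ℝ)| := hbound
      _ = 1 / (2 * (1 + α / 2)) * n := by rw [abs_of_pos hNpos]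
    rw [div_le_iff₀ hNpos]
    have h1α : (0 : ℝ) < 1 + α / 2 := by linarith
    calc (1 + α / 2) * Real.log n ≤ (1 + α / 2) * (1 / (2 * (1 + α / 2)) * n) := by
          apply mul_le_mul_of_nonneg_left hlogle (le_of_lt h1α)
    _ = 1 / 2 * n := by field_simp
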